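/- arXiv:2212.00918 — 2 statements merged into one kernel-verified Lean document; each statement's English description precedes it below -/
import Mathlib

section
/- Let k and l be positive integers with k > 1, let p = P(k·l) be the largest prime factor of k·l, and suppose p divides k but p does not divide l. Then there are no positive integers m and n such that the rational number p^{−v_p(k) − 1} equals φ(k·m^2)/φ(l·n^2), where v_p denotes the p-adic valuation. -/
/-- The largest prime factor of `n`, with the convention that it is `1`
when `n` has no prime factors (in particular `P(1) = 1`). -/
def maxPrimeFac (n : ℕ) : ℕ := WithBot.unbotD 1 n.primeFactors.max

lemma maxPrimeFac_mem {n : ℕ} (hn : 1 < n) : maxPrimeFac n ∈ n.primeFactors := by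
  have hne : n.primeFactors.Nonempty := Nat.nonempty_primeFactors.mpr hn
  rw [maxPrimeFac, ← Finset.coe_max' hne, WithBot.unbotD_coe]
  exact Finset.max'_mem _ hne

lemma le_maxPrimeFac {n q : ℕ} (hq : q ∈ n.primeFactors) : q ≤ maxPrimeFac n := by
  have hne : n.primeFactors.Nonempty := ⟨q, hq⟩
  rw [maxPrimeFac, ← Finset.coe_max' hne, WithBot.unbotD_coe]
  exact Finset.le_max' _ _ hq

lemma not_dvd_totient {Q N : ℕ} (hQ : Q.Prime) (hN : N ≠ 0)
    (h : ∀ q ∈ N.primeFactors, q < Q) : ¬ Q ∣ N.totient := by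
  rw [Nat.totient_eq_prod_factorization hN, Finsupp.prod]
  intro hdvd
  obtain ⟨q, hqmem, hqdvd⟩ := (Prime.dvd_finset_prod_iff hQ.prime _).1 hdvd
  have hqmem' : q ∈ N.primeFactors := by rwa [Nat.support_factorization] at hqmem
  have hqp : q.Prime := Nat.prime_of_mem_primeFactors hqmem'
  have hlt := h q hqmem'
  rcases (Nat.Prime.dvd_mul hQ).1 hqdvd with h1 | h2
  · have h3 : Q ∣ q := hQ.dvd_of_dvd_pow h1
    have := (Nat.prime_dvd_prime_iff_eq hQ hqp).1 h3
    omega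
  · have h1 : 1 ≤ q - 1 := by have := hqp.two_le; omega
    have := Nat.le_of_dvd (by omega) h2
    omega

lemma not_dvd_of_forall_lt {Q X : ℕ} (hQ : Q.Prime) (hX : X ≠ 0)
    (h : ∀ q ∈ X.primeFactors, q < Q) : ¬ Q ∣ X := fun hd =>
  lt_irrefl Q (h Q (Nat.mem_primeFactors.mpr ⟨hQ, hd, hX⟩))

lemma pow_cancel {Q s t X Y : ℕ} (hQ : Q.Prime) (hX : ¬ Q ∣ X) (hY : ¬ Q ∣ Y)
    (h : Q ^ s * X = Q ^ t * Y) : s = t ∧ X = Y := by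
  haveI : Fact Q.Prime := ⟨hQ⟩
  have hX0 : X ≠ 0 := fun h0 => hX (h0 ▸ dvd_zero Q)
  have hY0 : Y ≠ 0 := fun h0 => hY (h0 ▸ dvd_zero Q)
  have hst : s = t := by
    have h1 := congrArg (padicValNat Q) h
    rw [padicValNat.mul (pow_ne_zero _ hQ.pos.ne') hX0,
        padicValNat.mul (pow_ne_zero _ hQ.pos.ne') hY0,
        padicValNat.prime_pow, padicValNat.prime_pow,
        padicValNat.eq_zero_of_not_dvd hX, padicValNat.eq_zero_of_not_dvd hY] at h1
    omega
  subst hst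
  exact ⟨rfl, Nat.eq_of_mul_eq_mul_left (pow_pos hQ.pos s) h⟩

lemma tot_split {Q e R : ℕ} (hQ : Q.Prime) (hR : ¬ Q ∣ R) (he : 0 < e) :
    (Q ^ e * R).totient = Q ^ (e - 1) * (Q - 1) * R.totient := by
  rw [Nat.totient_mul (Nat.Coprime.pow_left e (hQ.coprime_iff_not_dvd.mpr hR)),
      Nat.totient_prime_pow hQ he]

lemma key (p k l a : ℕ) (hp : p.Prime) (hpk : ¬ p ∣ k) (hpl : ¬ p ∣ l)
    (hkq : ∀ q, q.Prime → q ∣ k → q < p) (hlq : ∀ q, q.Prime → q ∣ l → q < p)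
    (ha : 1 ≤ a) :
    ∀ m, 0 < m → ∀ n, 0 < n →
      Nat.totient (l * n ^ 2) ≠ p ^ (a + 1) * Nat.totient (p ^ a * k * m ^ 2) := by
  have hk0 : k ≠ 0 := fun h => hpk (h ▸ dvd_zero p)
  have hl0 : l ≠ 0 := fun h => hpl (h ▸ dvd_zero p)
  intro m
  induction m using Nat.strong_induction_on with
  | _ m IH =>
  intro hm n hn heq
  by_cases hbig : p < maxPrimeFac (m * n)
  · -- there is a prime factor of m*n larger than p
    set Q := maxPrimeFac (m * n) with hQdef
    have hmn1 : 1 < m * n := by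
      rcases Nat.lt_or_ge (m * n) 2 with h | h
      · have h1 : m * n = 1 := by nlinarith
        have h2 : Q = 1 := by rw [hQdef, h1]; simp [maxPrimeFac]
        have := hp.two_le; omega
      · omega
    have hQmem := maxPrimeFac_mem hmn1
    have hQp : Q.Prime := Nat.prime_of_mem_primeFactors hQmem
    have hQdvd : Q ∣ m * n := Nat.dvd_of_mem_primeFactors hQmem
    have hqle : ∀ q, q.Prime → q ∣ m * n → q ≤ Q := fun q hq hd =>
      le_maxPrimeFac (Nat.mem_primeFactors.mpr ⟨hq, hd, by positivity⟩)
    have hQk : ¬ Q ∣ k := fun hd => absurd (hkq Q hQp hd) (by omega)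
    have hQl : ¬ Q ∣ l := fun hd => absurd (hlq Q hQp hd) (by omega)
    have hQnep : Q ≠ p := by omega
    set v := m.factorization Q with hv
    set w := n.factorization Q with hw
    set m' := m / Q ^ v with hm'def
    set n' := n / Q ^ w with hn'def
    have hmm : Q ^ v * m' = m := Nat.ordProj_mul_ordCompl_eq_self m Q
    have hnn : Q ^ w * n' = n := Nat.ordProj_mul_ordCompl_eq_self n Q
    have hQm' : ¬ Q ∣ m' := Nat.not_dvd_ordCompl hQp hm.ne'
    have hQn' : ¬ Q ∣ n' := Nat.not_dvd_ordCompl hQp hn.ne'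
    have hm'0 : 0 < m' := Nat.ordCompl_pos Q hm.ne'
    have hn'0 : 0 < n' := Nat.ordCompl_pos Q hn.ne'
    have hm'dvd : m' ∣ m := Nat.ordCompl_dvd m Q
    have hn'dvd : n' ∣ n := Nat.ordCompl_dvd n Q
    -- all prime factors of l * n'^2 are < Q
    have hLlt : ∀ q ∈ (l * n' ^ 2).primeFactors, q < Q := by
      intro q hq
      obtain ⟨hqp, hqd, -⟩ := Nat.mem_primeFactors.mp hq
      rcases (Nat.Prime.dvd_mul hqp).1 hqd with h1 | h2
      · have := hlq q hqp h1; omega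
      · have h3 : q ∣ n' := hqp.dvd_of_dvd_pow h2
        have h4 : q ∣ m * n := Dvd.dvd.mul_left (h3.trans hn'dvd) m
        have h5 := hqle q hqp h4
        have h6 : q ≠ Q := fun he => hQn' (he ▸ h3)
        omega
    have hRlt : ∀ q ∈ (p ^ a * k * m' ^ 2).primeFactors, q < Q := by
      intro q hq
      obtain ⟨hqp, hqd, -⟩ := Nat.mem_primeFactors.mp hq
      rcases (Nat.Prime.dvd_mul hqp).1 hqd with h1 | h2
      · rcases (Nat.Prime.dvd_mul hqp).1 h1 with h3 | h4
        · have h5 : q ∣ p := hqp.dvd_of_dvd_pow h3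
          have := (Nat.prime_dvd_prime_iff_eq hqp hp).1 h5
          omega
        · have := hkq q hqp h4; omega
      · have h3 : q ∣ m' := hqp.dvd_of_dvd_pow h2
        have h4 : q ∣ m * n := Dvd.dvd.mul_right (h3.trans hm'dvd) n
        have h5 := hqle q hqp h4
        have h6 : q ≠ Q := fun he => hQm' (he ▸ h3)
        omega
    have hL0 : l * n' ^ 2 ≠ 0 := by positivity
    have hR0 : p ^ a * k * m' ^ 2 ≠ 0 := by
      have := hp.pos; positivity
    have hQL : ¬ Q ∣ l * n' ^ 2 := not_dvd_of_forall_lt hQp hL0 hLlt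
    have hQR : ¬ Q ∣ p ^ a * k * m' ^ 2 := not_dvd_of_forall_lt hQp hR0 hRlt
    have hsplitm : p ^ a * k * m ^ 2 = Q ^ (2 * v) * (p ^ a * k * m' ^ 2) := by
      rw [← hmm]; ring
    have hsplitn : l * n ^ 2 = Q ^ (2 * w) * (l * n' ^ 2) := by
      rw [← hnn]; ring
    rcases Nat.eq_zero_or_pos v with hv0 | hv1 <;> rcases Nat.eq_zero_or_pos w with hw0 | hw1
    · -- v = 0, w = 0: Q divides neither m nor n
      rcases (Nat.Prime.dvd_mul hQp).1 hQdvd with h1 | h2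
      · exact absurd (hQp.factorization_pos_of_dvd hm.ne' h1) (by omega)
      · exact absurd (hQp.factorization_pos_of_dvd hn.ne' h2) (by omega)
    · -- v = 0, w ≥ 1 : Q divides LHS but not RHS
      rw [hsplitn, tot_split hQp hQL (by omega)] at heq
      have hQRm : ¬ Q ∣ p ^ a * k * m ^ 2 := by
        rw [hsplitm, hv0]; simpa using hQR
      have hdL : Q ∣ Q ^ (2 * w - 1) * (Q - 1) * (l * n' ^ 2).totient :=
        Dvd.dvd.mul_right (Dvd.dvd.mul_right (dvd_pow_self Q (by omega)) _) _
      rw [heq] at hdL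
      rcases (Nat.Prime.dvd_mul hQp).1 hdL with h1 | h2
      · exact hQnep ((Nat.prime_dvd_prime_iff_eq hQp hp).1 (hQp.dvd_of_dvd_pow h1))
      · have hRmlt : ∀ q ∈ (p ^ a * k * m ^ 2).primeFactors, q < Q := by
          rw [hsplitm, hv0]; simpa using hRlt
        exact not_dvd_totient hQp (by rw [hsplitm, hv0]; simpa using hR0) hRmlt h2
    · -- v ≥ 1, w = 0 : Q divides RHS but not LHS
      rw [hsplitm, tot_split hQp hQR (by omega)] at heq
      have hLlt' : ∀ q ∈ (l * n ^ 2).primeFactors, q < Q := by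
        rw [hsplitn, hw0]; simpa using hLlt
      have hnd : ¬ Q ∣ (l * n ^ 2).totient :=
        not_dvd_totient hQp (by rw [hsplitn, hw0]; simpa using hL0) hLlt'
      apply hnd
      rw [heq]
      exact Dvd.dvd.mul_left
        (Dvd.dvd.mul_right (Dvd.dvd.mul_right (dvd_pow_self Q (by omega)) _) _) _
    · -- v ≥ 1, w ≥ 1
      rw [hsplitn, tot_split hQp hQL (by omega), hsplitm, tot_split hQp hQR (by omega)] at heq
      have hX : ¬ Q ∣ (Q - 1) * (l * n' ^ 2).totient := by
        intro hd
        rcases (Nat.Prime.dvd_mul hQp).1 hd with h1 | h2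
        · have := Nat.le_of_dvd (by have := hQp.two_le; omega) h1; omega
        · exact not_dvd_totient hQp hL0 hLlt h2
      have hY : ¬ Q ∣ p ^ (a + 1) * ((Q - 1) * (p ^ a * k * m' ^ 2).totient) := by
        intro hd
        rcases (Nat.Prime.dvd_mul hQp).1 hd with h1 | h2
        · exact hQnep ((Nat.prime_dvd_prime_iff_eq hQp hp).1 (hQp.dvd_of_dvd_pow h1))
        · rcases (Nat.Prime.dvd_mul hQp).1 h2 with h3 | h4
          · have := Nat.le_of_dvd (by have := hQp.two_le; omega) h3; omega
          · exact not_dvd_totient hQp hR0 hRlt h4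
      have h' : Q ^ (2 * w - 1) * ((Q - 1) * (l * n' ^ 2).totient) =
          Q ^ (2 * v - 1) * (p ^ (a + 1) * ((Q - 1) * (p ^ a * k * m' ^ 2).totient)) := by
        calc Q ^ (2 * w - 1) * ((Q - 1) * (l * n' ^ 2).totient)
            = Q ^ (2 * w - 1) * (Q - 1) * (l * n' ^ 2).totient := by ring
          _ = p ^ (a + 1) * (Q ^ (2 * v - 1) * (Q - 1) * (p ^ a * k * m' ^ 2).totient) := heq
          _ = Q ^ (2 * v - 1) * (p ^ (a + 1) * ((Q - 1) * (p ^ a * k * m' ^ 2).totient)) := by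
              ring
      obtain ⟨h1, h2⟩ := pow_cancel hQp hX hY h'
      have h3 : (l * n' ^ 2).totient = p ^ (a + 1) * (p ^ a * k * m' ^ 2).totient := by
        apply Nat.eq_of_mul_eq_mul_left (show 0 < Q - 1 by have := hQp.two_le; omega)
        calc (Q - 1) * (l * n' ^ 2).totient
            = p ^ (a + 1) * ((Q - 1) * (p ^ a * k * m' ^ 2).totient) := h2
          _ = (Q - 1) * (p ^ (a + 1) * (p ^ a * k * m' ^ 2).totient) := by ring
      have hm'lt : m' < m := by
        have h4 : 1 < Q ^ v := Nat.one_lt_pow (by omega) hQp.one_lt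
        calc m' = 1 * m' := (one_mul m').symm
          _ < Q ^ v * m' := (Nat.mul_lt_mul_right hm'0).mpr h4
          _ = m := hmm
      exact IH m' hm'lt hm'0 n' hn'0 h3
  · -- base case: all prime factors of m * n are ≤ p
    push_neg at hbig
    have hqle : ∀ q, q.Prime → q ∣ m * n → q ≤ p := fun q hq hd =>
      le_trans (le_maxPrimeFac (Nat.mem_primeFactors.mpr ⟨hq, hd, by positivity⟩)) hbig
    set b := m.factorization p with hb
    set c := n.factorization p with hc
    set m' := m / p ^ b with hm'def
    set n' := n / p ^ c with hn'def
    have hmm : p ^ b * m' = m := Nat.ordProj_mul_ordCompl_eq_self m p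
    have hnn : p ^ c * n' = n := Nat.ordProj_mul_ordCompl_eq_self n p
    have hpm' : ¬ p ∣ m' := Nat.not_dvd_ordCompl hp hm.ne'
    have hpn' : ¬ p ∣ n' := Nat.not_dvd_ordCompl hp hn.ne'
    have hm'0 : 0 < m' := Nat.ordCompl_pos p hm.ne'
    have hn'0 : 0 < n' := Nat.ordCompl_pos p hn.ne'
    have hm'dvd : m' ∣ m := Nat.ordCompl_dvd m p
    have hn'dvd : n' ∣ n := Nat.ordCompl_dvd n p
    have hRlt : ∀ q ∈ (k * m' ^ 2).primeFactors, q < p := by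
      intro q hq
      obtain ⟨hqp, hqd, -⟩ := Nat.mem_primeFactors.mp hq
      rcases (Nat.Prime.dvd_mul hqp).1 hqd with h1 | h2
      · exact hkq q hqp h1
      · have h3 : q ∣ m' := hqp.dvd_of_dvd_pow h2
        have h4 := hqle q hqp (Dvd.dvd.mul_right (h3.trans hm'dvd) n)
        have h6 : q ≠ p := fun he => hpm' (he ▸ h3)
        omega
    have hLlt : ∀ q ∈ (l * n' ^ 2).primeFactors, q < p := by
      intro q hq
      obtain ⟨hqp, hqd, -⟩ := Nat.mem_primeFactors.mp hq
      rcases (Nat.Prime.dvd_mul hqp).1 hqd with h1 | h2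
      · exact hlq q hqp h1
      · have h3 : q ∣ n' := hqp.dvd_of_dvd_pow h2
        have h4 := hqle q hqp (Dvd.dvd.mul_left (h3.trans hn'dvd) m)
        have h6 : q ≠ p := fun he => hpn' (he ▸ h3)
        omega
    have hR0 : k * m' ^ 2 ≠ 0 := by positivity
    have hL0 : l * n' ^ 2 ≠ 0 := by positivity
    have hpR : ¬ p ∣ k * m' ^ 2 := not_dvd_of_forall_lt hp hR0 hRlt
    have hpL : ¬ p ∣ l * n' ^ 2 := not_dvd_of_forall_lt hp hL0 hLlt
    have hsplitm : p ^ a * k * m ^ 2 = p ^ (a + 2 * b) * (k * m' ^ 2) := by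
      rw [← hmm]; ring
    rw [hsplitm, tot_split hp hpR (by omega)] at heq
    rcases Nat.eq_zero_or_pos c with hc0 | hc1
    · -- p does not divide n, so p does not divide the LHS totient
      have hLlt' : ∀ q ∈ (l * n ^ 2).primeFactors, q < p := by
        have : l * n ^ 2 = l * n' ^ 2 := by rw [← hnn, hc0]; ring
        rw [this]; exact hLlt
      have hnd : ¬ p ∣ (l * n ^ 2).totient :=
        not_dvd_totient hp (by positivity) hLlt'
      apply hnd
      rw [heq]
      exact Dvd.dvd.mul_right (dvd_pow_self p (by omega)) _
    · have hsplitn : l * n ^ 2 = p ^ (2 * c) * (l * n' ^ 2) := by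
        rw [← hnn]; ring
      rw [hsplitn, tot_split hp hpL (by omega)] at heq
      have hX : ¬ p ∣ (p - 1) * (l * n' ^ 2).totient := by
        intro hd
        have h2le := hp.two_le
        rcases (Nat.Prime.dvd_mul hp).1 hd with h1 | h2
        · have := Nat.le_of_dvd (by omega) h1; omega
        · exact not_dvd_totient hp hL0 hLlt h2
      have hY : ¬ p ∣ (p - 1) * (k * m' ^ 2).totient := by
        intro hd
        have h2le := hp.two_le
        rcases (Nat.Prime.dvd_mul hp).1 hd with h1 | h2
        · have := Nat.le_of_dvd (by omega) h1; omega
        · exact not_dvd_totient hp hR0 hRlt h2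
      have h' : p ^ (2 * c - 1) * ((p - 1) * (l * n' ^ 2).totient) =
          p ^ ((a + 1) + (a + 2 * b - 1)) * ((p - 1) * (k * m' ^ 2).totient) := by
        calc p ^ (2 * c - 1) * ((p - 1) * (l * n' ^ 2).totient)
            = p ^ (2 * c - 1) * (p - 1) * (l * n' ^ 2).totient := by ring
          _ = p ^ (a + 1) * (p ^ (a + 2 * b - 1) * (p - 1) * (k * m' ^ 2).totient) := heq
          _ = p ^ ((a + 1) + (a + 2 * b - 1)) * ((p - 1) * (k * m' ^ 2).totient) := by
              rw [pow_add]; ring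
      obtain ⟨h1, -⟩ := pow_cancel hp hX hY h'
      omega

theorem stmt_6 (k l p : ℕ) (hk : 1 < k) (hl : 0 < l)
    (hp : p = maxPrimeFac (k * l)) (hdvdk : p ∣ k) (hndvdl : ¬ p ∣ l) :
    ¬ ∃ m n : ℕ, 0 < m ∧ 0 < n ∧
      (p : ℚ) ^ (-(padicValNat p k : ℤ) - 1) =
        (Nat.totient (k * m ^ 2) : ℚ) / (Nat.totient (l * n ^ 2) : ℚ) := by
  rintro ⟨m, n, hm, hn, h⟩
  have hkl1 : 1 < k * l := by nlinarith
  have hpmem : p ∈ (k * l).primeFactors := hp ▸ maxPrimeFac_mem hkl1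
  have hpp : p.Prime := Nat.prime_of_mem_primeFactors hpmem
  have hqle : ∀ q, q.Prime → q ∣ k * l → q ≤ p := fun q hq hd =>
    hp ▸ le_maxPrimeFac (Nat.mem_primeFactors.mpr ⟨hq, hd, by positivity⟩)
  set a := padicValNat p k with hadef
  have hafac : k.factorization p = a := Nat.factorization_def k hpp
  have ha1 : 1 ≤ a := by
    have := hpp.factorization_pos_of_dvd (by omega) hdvdk
    omega
  set k' := k / p ^ k.factorization p with hk'def
  have hkk : p ^ a * k' = k := by
    rw [← hafac]; exact Nat.ordProj_mul_ordCompl_eq_self k p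
  have hpk' : ¬ p ∣ k' := Nat.not_dvd_ordCompl hpp (by omega)
  have hk'dvd : k' ∣ k := Nat.ordCompl_dvd k p
  have hkq : ∀ q, q.Prime → q ∣ k' → q < p := by
    intro q hq hd
    have h4 := hqle q hq (Dvd.dvd.mul_right (hd.trans hk'dvd) l)
    have h6 : q ≠ p := fun he => hpk' (he ▸ hd)
    omega
  have hlq : ∀ q, q.Prime → q ∣ l → q < p := by
    intro q hq hd
    have h4 := hqle q hq (Dvd.dvd.mul_left hd k)
    have h6 : q ≠ p := fun he => hndvdl (he ▸ hd)
    omega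
  -- convert the rational equation into a natural number equation
  have hT1 : 0 < (k * m ^ 2).totient := Nat.totient_pos.mpr (by positivity)
  have hT2 : 0 < (l * n ^ 2).totient := Nat.totient_pos.mpr (by positivity)
  have hp0 : (p : ℚ) ≠ 0 := by
    have := hpp.two_le
    exact_mod_cast (by omega : p ≠ 0)
  have hexp : (-(a : ℤ) - 1) = -((a + 1 : ℕ) : ℤ) := by push_cast; ring
  rw [hexp, zpow_neg, zpow_natCast] at h
  have hT2Q : ((l * n ^ 2).totient : ℚ) ≠ 0 := by exact_mod_cast hT2.ne'
  have hppow : ((p : ℚ) ^ (a + 1)) ≠ 0 := pow_ne_zero _ hp0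
  have hnat : (l * n ^ 2).totient = p ^ (a + 1) * (k * m ^ 2).totient := by
    have h2 : ((l * n ^ 2).totient : ℚ) = (p : ℚ) ^ (a + 1) * (k * m ^ 2).totient := by
      field_simp at h
      linarith [h]
    exact_mod_cast h2
  rw [← hkk] at hnat
  exact key p k' l a hpp hpk' hndvdl hkq hlq ha1 m hm n hn hnat
end

section
/- Let a, b be positive integers with gcd(a, b) > 1 and let m, n be positive integers with m·n > 1, and let q = P(m·n) be the largest prime factor of m·n. Then v_q(φ(m^a)/φ(n^b)) equals a·v_q(m) − b·v_q(n) if v_q(m) ≠ 0 and v_q(n) ≠ 0; it equals a·v_q(m) − 1 if v_q(n) = 0; and it equals −b·v_q(n) + 1 if v_q(m) = 0. -/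
lemma lemC {q M : ℕ} (hq : q.Prime) (hM : M ≠ 0)
    (h : ∀ p ∈ M.primeFactors, p < q) : ¬ q ∣ M.totient := by
  rw [Nat.totient_eq_prod_factorization hM]
  refine Prime.not_dvd_finsuppProd hq.prime ?_
  intro p hp
  rw [Nat.support_factorization] at hp
  have hplt := h p hp
  have hpp := Nat.prime_of_mem_primeFactors hp
  intro hd
  rcases (Nat.Prime.dvd_mul hq).1 hd with h1 | h1
  · have := (Nat.prime_dvd_prime_iff_eq hq hpp).1 (hq.dvd_of_dvd_pow h1)
    omega
  · have : p - 1 < q := lt_of_le_of_lt (Nat.sub_le p 1) hplt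
    have hpos : 0 < p - 1 := by have := hpp.two_le; omega
    exact absurd (Nat.le_of_dvd hpos h1) (by omega)

lemma lemB {q N : ℕ} (a : ℕ) (ha : 0 < a) (hq : q.Prime) (hN0 : N ≠ 0) (hN : ¬ q ∣ N)
    (h : ∀ p ∈ N.primeFactors, p ≤ q) : padicValNat q ((N ^ a).totient) = 0 := by
  apply padicValNat.eq_zero_of_not_dvd
  apply lemC hq (pow_ne_zero a hN0)
  intro p hp
  rw [Nat.primeFactors_pow N ha.ne'] at hp
  have hle := h p hp
  have : p ≠ q := fun he => hN (he ▸ Nat.dvd_of_mem_primeFactors hp)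
  omega

lemma lemA {q N : ℕ} (a : ℕ) (ha : 0 < a) (hq : q.Prime) (hN0 : N ≠ 0) (hN : q ∣ N)
    (h : ∀ p ∈ N.primeFactors, p ≤ q) :
    padicValNat q ((N ^ a).totient) = a * padicValNat q N - 1 := by
  haveI : Fact q.Prime := ⟨hq⟩
  set k := N.factorization q with hk
  have hkval : padicValNat q N = k := (Nat.factorization_def N hq).symm
  have hk1 : 1 ≤ k := (Nat.Prime.factorization_pos_of_dvd hq hN0 hN)
  set M := ordCompl[q] N with hM
  have hM0 : M ≠ 0 := (Nat.ordCompl_pos q hN0).ne'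
  have hqM : ¬ q ∣ M := Nat.not_dvd_ordCompl hq hN0
  have hNe : N = q ^ k * M := (Nat.ordProj_mul_ordCompl_eq_self N q).symm
  have hMsub : M.primeFactors ⊆ N.primeFactors :=
    Nat.primeFactors_mono (Nat.ordCompl_dvd N q) hN0
  have hMle : ∀ p ∈ M.primeFactors, p ≤ q := fun p hp => h p (hMsub hp)
  have hak : 0 < a * k := Nat.mul_pos ha hk1
  have hcop : Nat.Coprime (q ^ (a * k)) (M ^ a) :=
    Nat.Coprime.pow _ _ ((Nat.Prime.coprime_iff_not_dvd hq).2 hqM)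
  have hpow : N ^ a = q ^ (a * k) * M ^ a := by
    rw [hNe, mul_pow, ← pow_mul, mul_comm k a]
  rw [hpow, Nat.totient_mul hcop, Nat.totient_prime_pow hq hak]
  have h1 : q ^ (a * k - 1) * (q - 1) ≠ 0 :=
    Nat.mul_ne_zero (pow_ne_zero _ hq.pos.ne') (by have := hq.two_le; omega)
  have h2 : (M ^ a).totient ≠ 0 := (Nat.totient_pos.2 (pow_pos (Nat.pos_of_ne_zero hM0) a)).ne'
  rw [padicValNat.mul h1 h2, lemB a ha hq hM0 hqM hMle, add_zero,
    padicValNat.mul (pow_ne_zero _ hq.pos.ne') (by have := hq.two_le; omega),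
    padicValNat.prime_pow,
    padicValNat.eq_zero_of_not_dvd
      (fun hd => absurd (Nat.le_of_dvd (by have := hq.two_le; omega) hd)
        (by have := hq.two_le; omega) : ¬ q ∣ q - 1), add_zero, hkval]

lemma maxPrimeFac_spec {N : ℕ} (h : 1 < N) :
    maxPrimeFac N ∈ N.primeFactors ∧ ∀ p ∈ N.primeFactors, p ≤ maxPrimeFac N := by
  obtain ⟨v, hv⟩ := Finset.max_of_nonempty (Nat.nonempty_primeFactors.2 h)
  have hval : maxPrimeFac N = v := by rw [maxPrimeFac, hv]; rfl
  refine ⟨hval ▸ Finset.mem_of_max hv, fun p hp => ?_⟩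
  have := Finset.le_max hp
  rw [hv] at this
  exact hval ▸ WithBot.coe_le_coe.1 this

theorem stmt_16 (a b m n q : ℕ) (ha : 0 < a) (hb : 0 < b) (hm : 0 < m) (hn : 0 < n)
    (hab : 1 < Nat.gcd a b) (hmn : 1 < m * n) (hq : q = maxPrimeFac (m * n)) :
    (padicValNat q m ≠ 0 → padicValNat q n ≠ 0 →
      padicValRat q ((Nat.totient (m ^ a) : ℚ) / (Nat.totient (n ^ b) : ℚ)) =
        (a : ℤ) * padicValNat q m - (b : ℤ) * padicValNat q n) ∧
    (padicValNat q n = 0 →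
      padicValRat q ((Nat.totient (m ^ a) : ℚ) / (Nat.totient (n ^ b) : ℚ)) =
        (a : ℤ) * padicValNat q m - 1) ∧
    (padicValNat q m = 0 →
      padicValRat q ((Nat.totient (m ^ a) : ℚ) / (Nat.totient (n ^ b) : ℚ)) =
        -((b : ℤ) * padicValNat q n) + 1) := by
  obtain ⟨hmem, hmax⟩ := maxPrimeFac_spec hmn
  rw [← hq] at hmem hmax
  have hqp : q.Prime := Nat.prime_of_mem_primeFactors hmem
  haveI : Fact q.Prime := ⟨hqp⟩
  have hqmn : q ∣ m * n := Nat.dvd_of_mem_primeFactors hmem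
  have hmn0 : m * n ≠ 0 := by positivity
  have hmle : ∀ p ∈ m.primeFactors, p ≤ q := fun p hp =>
    hmax p (Nat.primeFactors_mono ⟨n, rfl⟩ hmn0 hp)
  have hnle : ∀ p ∈ n.primeFactors, p ≤ q := fun p hp =>
    hmax p (Nat.primeFactors_mono ⟨m, mul_comm m n⟩ hmn0 hp)
  have hA0 : ((Nat.totient (m ^ a) : ℚ)) ≠ 0 := by
    exact_mod_cast (Nat.totient_pos.2 (pow_pos hm a)).ne'
  have hB0 : ((Nat.totient (n ^ b) : ℚ)) ≠ 0 := by
    exact_mod_cast (Nat.totient_pos.2 (pow_pos hn b)).ne'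
  have hdiv : padicValRat q ((Nat.totient (m ^ a) : ℚ) / (Nat.totient (n ^ b) : ℚ)) =
      (padicValNat q ((m ^ a).totient) : ℤ) - (padicValNat q ((n ^ b).totient) : ℤ) := by
    rw [padicValRat.div hA0 hB0, padicValRat.of_nat, padicValRat.of_nat]
  have hm0 : padicValNat q m = 0 ↔ ¬ q ∣ m := by
    rw [padicValNat.eq_zero_iff]; simp [hqp.ne_one, hm.ne']
  have hn0 : padicValNat q n = 0 ↔ ¬ q ∣ n := by
    rw [padicValNat.eq_zero_iff]; simp [hqp.ne_one, hn.ne']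
  have hkm : q ∣ m → 1 ≤ padicValNat q m := by
    intro hd
    rw [← Nat.factorization_def m hqp]
    exact Nat.Prime.factorization_pos_of_dvd hqp hm.ne' hd
  have hkn : q ∣ n → 1 ≤ padicValNat q n := by
    intro hd
    rw [← Nat.factorization_def n hqp]
    exact Nat.Prime.factorization_pos_of_dvd hqp hn.ne' hd
  refine ⟨?_, ?_, ?_⟩
  · intro h1 h2
    have hdm : q ∣ m := by by_contra hd; exact h1 (hm0.2 hd)
    have hdn : q ∣ n := by by_contra hd; exact h2 (hn0.2 hd)
    rw [hdiv, lemA a ha hqp hm.ne' hdm hmle, lemA b hb hqp hn.ne' hdn hnle]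
    have hx : 1 ≤ a * padicValNat q m := Nat.mul_pos ha (hkm hdm)
    have hy : 1 ≤ b * padicValNat q n := Nat.mul_pos hb (hkn hdn)
    rw [Nat.cast_sub hx, Nat.cast_sub hy]
    push_cast
    ring
  · intro h2
    have hdn : ¬ q ∣ n := hn0.1 h2
    have hdm : q ∣ m := ((Nat.Prime.dvd_mul hqp).1 hqmn).resolve_right hdn
    rw [hdiv, lemA a ha hqp hm.ne' hdm hmle, lemB b hb hqp hn.ne' hdn hnle]
    have hx : 1 ≤ a * padicValNat q m := Nat.mul_pos ha (hkm hdm)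
    rw [Nat.cast_sub hx]
    push_cast
    ring
  · intro h1
    have hdm : ¬ q ∣ m := hm0.1 h1
    have hdn : q ∣ n := ((Nat.Prime.dvd_mul hqp).1 hqmn).resolve_left hdm
    rw [hdiv, lemB a ha hqp hm.ne' hdm hmle, lemA b hb hqp hn.ne' hdn hnle]
    have hy : 1 ≤ b * padicValNat q n := Nat.mul_pos hb (hkn hdn)
    rw [Nat.cast_sub hy]
    push_cast
    ring
end
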